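/- Let g be bounded below, differentiable with L-Lipschitz gradient, and (x_n), (y_n) generated by the inertial algorithm y_n = x_n + (βn/(n+α))(x_n - x_{n-1}), x_{n+1} = y_n - s∇g(y_n) with β ∈ (0,1), α > 0, 0 < s < 2(1-β)/L. Then every cluster point x̄ of (x_n) is a critical point of g, and the cluster point sets of (x_n) and (y_n) coincide. -/

import Mathlib

open Filter Topology intervalIntegral

local notation "⟪" a ", " b "⟫" => @inner ℝ _ _ a b

variable {F : Type*} [NormedAddCommGroup F] [InnerProductSpace ℝ F] [CompleteSpace F]

lemma grad_cont (g : F → ℝ) (L : ℝ) (hL : 0 < L)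
    (hlip : ∀ u v, ‖gradient g u - gradient g v‖ ≤ L * ‖u - v‖) :
    Continuous (gradient g) := by
  have : LipschitzWith L.toNNReal (gradient g) := by
    apply LipschitzWith.of_dist_le_mul
    intro u v
    rw [dist_eq_norm, dist_eq_norm, Real.coe_toNNReal _ hL.le]
    exact hlip u v
  exact this.continuous

lemma descent (g : F → ℝ) (L : ℝ) (hL : 0 < L) (hdiff : Differentiable ℝ g)
    (hlip : ∀ u v, ‖gradient g u - gradient g v‖ ≤ L * ‖u - v‖) (a b : F) :
    |g b - g a - ⟪gradient g a, b - a⟫| ≤ L / 2 * ‖b - a‖ ^ 2 := by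
  set c : ℝ → F := fun t => a + t • (b - a) with hc
  have hcd : ∀ t : ℝ, HasDerivAt c (b - a) t := by
    intro t
    have := ((hasDerivAt_id t).smul_const (b - a)).const_add a
    rw [one_smul] at this
    exact this
  have hgd : ∀ u : F, HasFDerivAt g ((InnerProductSpace.toDual ℝ F) (gradient g u)) u := by
    intro u
    exact (hdiff u).hasGradientAt
  have hφ : ∀ t : ℝ, HasDerivAt (fun t => g (c t) - t * ⟪gradient g a, b - a⟫)
      (⟪gradient g (c t), b - a⟫ - ⟪gradient g a, b - a⟫) t := by
    intro t
    have h1 : HasDerivAt (fun t => g (c t)) (⟪gradient g (c t), b - a⟫) t := by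
      have := (hgd (c t)).comp_hasDerivAt t (hcd t)
      exact this
    exact h1.sub (hasDerivAt_mul_const (⟪gradient g a, b - a⟫ : ℝ))
  have hcont : Continuous fun t : ℝ => (⟪gradient g (c t), b - a⟫ : ℝ) - ⟪gradient g a, b - a⟫ := by
    have := grad_cont g L hL hlip
    rw [hc]
    fun_prop
  have key : g b - g a - ⟪gradient g a, b - a⟫ =
      ∫ t in (0:ℝ)..1, (⟪gradient g (c t), b - a⟫ - ⟪gradient g a, b - a⟫) := by
    rw [intervalIntegral.integral_eq_sub_of_hasDerivAt (fun t _ => hφ t)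
      (hcont.intervalIntegrable 0 1)]
    simp [hc]; ring
  rw [key]
  calc |∫ t in (0:ℝ)..1, (⟪gradient g (c t), b - a⟫ - ⟪gradient g a, b - a⟫)|
      ≤ ∫ t in (0:ℝ)..1, |(⟪gradient g (c t), b - a⟫ : ℝ) - ⟪gradient g a, b - a⟫| := by
        simpa using intervalIntegral.norm_integral_le_integral_norm (f := fun t : ℝ =>
          (⟪gradient g (c t), b - a⟫ : ℝ) - ⟪gradient g a, b - a⟫) (by norm_num : (0:ℝ) ≤ 1)
    _ ≤ ∫ t in (0:ℝ)..1, L * ‖b - a‖ ^ 2 * t := by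
        apply intervalIntegral.integral_mono_on (by norm_num) (hcont.abs.intervalIntegrable 0 1)
          (by apply Continuous.intervalIntegrable; continuity)
        intro t ht
        rw [Set.mem_Icc] at ht
        have h1 : |(⟪gradient g (c t), b - a⟫ : ℝ) - ⟪gradient g a, b - a⟫|
            ≤ ‖gradient g (c t) - gradient g a‖ * ‖b - a‖ := by
          rw [← inner_sub_left]
          exact abs_real_inner_le_norm _ _
        have h2 : ‖gradient g (c t) - gradient g a‖ ≤ L * (t * ‖b - a‖) := by
          have := hlip (c t) a
          simpa [hc, norm_smul, abs_of_nonneg ht.1] using this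
        calc |(⟪gradient g (c t), b - a⟫ : ℝ) - ⟪gradient g a, b - a⟫|
            ≤ ‖gradient g (c t) - gradient g a‖ * ‖b - a‖ := h1
          _ ≤ L * (t * ‖b - a‖) * ‖b - a‖ := by
              apply mul_le_mul_of_nonneg_right h2 (norm_nonneg _)
          _ = L * ‖b - a‖ ^ 2 * t := by ring
    _ = L / 2 * ‖b - a‖ ^ 2 := by
        rw [intervalIntegral.integral_const_mul]
        simp [integral_id]
        ring

lemma exists_consts (L β s : ℝ) (hβ₁ : 0 < β) (hβ₂ : β < 1) (hs₁ : 0 < s) (hL : 0 < L)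
    (hs₂ : s < 2 * (1 - β) / L) :
    ∃ c δ e : ℝ, 0 < δ ∧ 0 ≤ e ∧ e * β ^ 2 ≤ c - δ ∧ c ≤ 1 / (2 * s) ∧
      ∀ a b : ℝ, 0 ≤ a → 0 ≤ b →
        (c + L / 2 - e) * a ^ 2 + 2 * (1 / (2 * s) - c) * (a * b)
          + (c + L / 2 - 2 * (1 / (2 * s))) * b ^ 2 ≤ 0 := by
  have hσ2 : L * s < 2 - 2 * β := by
    have := (lt_div_iff₀ hL).mp hs₂
    nlinarith
  obtain ⟨q, hq, hqs, hqeq⟩ : ∃ q : ℝ, 0 < q ∧ q * (2 * s) = 1 ∧ q = 1 / (2 * s) :=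
    ⟨1 / (2 * s), by positivity, by field_simp, rfl⟩
  have hL2 : L / 2 = q * (L * s) := by linear_combination (-(L / 2)) * hqs
  rw [← hqeq]
  by_cases hcase : L * s ≤ 1
  · refine ⟨q, q - β ^ 2 * (q + L / 2), q + L / 2, ?_, by positivity,
      le_of_eq (by ring), le_refl _, ?_⟩
    · have h1 : β ^ 2 * (1 + L * s) < 1 := by nlinarith [sq_nonneg (1 - β), hβ₁.le]
      nlinarith [mul_pos hq (sub_pos.mpr h1)]
    · intro a b ha hb
      have hc3 : q + L / 2 - 2 * q ≤ 0 := by nlinarith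
      nlinarith [sq_nonneg b, mul_nonneg (sq_nonneg b) (neg_nonneg.mpr hc3)]
  · push_neg at hcase
    have hβ' : (0:ℝ) < 1 - β := by linarith
    obtain ⟨ω, hω, hω0, hω1⟩ : ∃ ω : ℝ, ω * (1 - β) = L * s - 1 ∧ 0 ≤ ω ∧ ω < 1 :=
      ⟨(L * s - 1) / (1 - β), by field_simp, div_nonneg (by linarith) (by linarith),
        by rw [div_lt_one hβ']; linarith⟩
    refine ⟨q * (1 - ω), q * (1 - ω) - (q * (1 - ω) + L / 2 + q * ω / β) * β ^ 2,
      q * (1 - ω) + L / 2 + q * ω / β, ?_, ?_, le_of_eq (by ring), ?_, ?_⟩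
    · have hX : 0 < (1 - ω) * (1 - β ^ 2) - β ^ 2 * (L * s) - β * ω := by
        have key : 0 < ((1 - ω) * (1 - β ^ 2) - β ^ 2 * (L * s) - β * ω) * (1 - β) := by
          nlinarith [hω,
            mul_nonneg (by nlinarith [pow_le_one₀ hβ₁.le hβ₂.le (n := 3)] :
              (0:ℝ) ≤ 1 + β - β ^ 3) (by linarith : (0:ℝ) ≤ 2 - 2 * β - L * s),
            mul_pos (mul_pos hβ₁ hβ₁) hβ₁]
        nlinarith [key, hβ']
      have heq : q * (1 - ω) - (q * (1 - ω) + L / 2 + q * ω / β) * β ^ 2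
          = q * ((1 - ω) * (1 - β ^ 2) - β ^ 2 * (L * s) - β * ω) := by
        rw [hL2]; field_simp; ring
      rw [heq]
      exact mul_pos hq hX
    · have h1 : 0 ≤ q * ω / β := by positivity
      nlinarith [mul_nonneg hq.le (by linarith : (0:ℝ) ≤ 1 - ω), hL.le, hs₁.le, hL2]
    · nlinarith [mul_nonneg hq.le hω0]
    · intro a b ha hb
      have hB : q * (1 - ω) + L / 2 - 2 * q = -(q * β * ω) := by
        rw [hL2]; linear_combination (-q) * hω
      have hA : q * (1 - ω) + L / 2 - (q * (1 - ω) + L / 2 + q * ω / β) = -(q * ω / β) := by ring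
      rw [hA, hB]
      have hfact : -(q * ω / β) * a ^ 2 + 2 * (q - q * (1 - ω)) * (a * b) + -(q * β * ω) * b ^ 2
          = -(q * ω / β) * (a - β * b) ^ 2 := by
        field_simp; ring
      rw [hfact]
      have h1 : 0 ≤ q * ω / β := by positivity
      nlinarith [sq_nonneg (a - β * b)]

set_option maxHeartbeats 1600000 in
/-- For the inertial algorithm with `g` bounded below, every cluster point of
`(xₙ)` is a critical point of `g`, and the cluster point sets of `(xₙ)` and
`(yₙ)` coincide. (Indexing: `x (n+1)` plays the role of `xₙ`.) -/
theorem cluster_points_critical {m : ℕ} (g : EuclideanSpace ℝ (Fin m) → ℝ) (L : ℝ)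
    (hdiff : Differentiable ℝ g)
    (hlip : ∀ u v, ‖gradient g u - gradient g v‖ ≤ L * ‖u - v‖)
    (hbdd : BddBelow (Set.range g))
    (β α s : ℝ) (hβ₁ : 0 < β) (hβ₂ : β < 1) (hα : 0 < α)
    (hs₁ : 0 < s) (hs₂ : s < 2 * (1 - β) / L) (hL : 0 < L)
    (x y : ℕ → EuclideanSpace ℝ (Fin m)) (hinit : x 0 = x 1)
    (hy : ∀ n : ℕ, y n = x (n + 1) + ((β * n) / ((n : ℝ) + α)) • (x (n + 1) - x n))
    (hstep : ∀ n : ℕ, x (n + 2) = y n - s • gradient g (y n)) :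
    (∀ p, (∃ φ : ℕ → ℕ, StrictMono φ ∧
        Tendsto (fun k => x (φ k + 1)) atTop (𝓝 p)) → gradient g p = 0) ∧
    {p | ∃ φ : ℕ → ℕ, StrictMono φ ∧ Tendsto (fun k => x (φ k + 1)) atTop (𝓝 p)} =
      {p | ∃ φ : ℕ → ℕ, StrictMono φ ∧ Tendsto (fun k => y (φ k)) atTop (𝓝 p)} := by
  obtain ⟨c, δ, e, hδ, he0, heβ, hcq, hquad⟩ := exists_consts L β s hβ₁ hβ₂ hs₁ hL hs₂
  have hc0 : 0 ≤ c := le_trans hδ.le (by nlinarith [mul_nonneg he0 (sq_nonneg β)])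
  obtain ⟨B, hB⟩ := hbdd
  have hBle : ∀ z, B ≤ g z := fun z => hB ⟨z, rfl⟩
  have hdesc := descent g L hL hdiff hlip
  set D : ℕ → ℝ := fun n => ‖x (n + 1) - x n‖ ^ 2 with hD
  clear_value D
  have hDpos : ∀ n, 0 ≤ D n := fun n => by rw [hD]; positivity
  -- the per-step Lyapunov inequality
  have hkey : ∀ n : ℕ, g (x (n + 2)) + c * D (n + 1) ≤ g (x (n + 1)) + (c - δ) * D n := by
    intro n
    set U : EuclideanSpace ℝ (Fin m) := y n - x (n + 1) with hU
    set V : EuclideanSpace ℝ (Fin m) := x (n + 2) - y n with hV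
    clear_value U V
    have hUV : U + V = x (n + 2) - x (n + 1) := by rw [hU, hV]; abel
    have hVval : V = -(s • gradient g (y n)) := by rw [hV, hstep n]; abel
    have hG : gradient g (y n) = -(s⁻¹ • V) := by
      rw [hVval, smul_neg, inv_smul_smul₀ hs₁.ne', neg_neg]
    have hGV : (⟪gradient g (y n), V⟫ : ℝ) = -(s⁻¹ * ‖V‖ ^ 2) := by
      rw [hG, inner_neg_left, real_inner_smul_left, real_inner_self_eq_norm_sq]
    have hGU : (⟪gradient g (y n), x (n + 1) - y n⟫ : ℝ) = s⁻¹ * ⟪U, V⟫ := by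
      have h1 : x (n + 1) - y n = -U := by rw [hU]; abel
      rw [h1, hG, inner_neg_neg, real_inner_smul_left, real_inner_comm V U]
    have d1 := abs_le.mp (hdesc (y n) (x (n + 2)))
    have d2 := abs_le.mp (hdesc (y n) (x (n + 1)))
    have hxny : x (n + 2) - y n = V := hV.symm
    have hnU : ‖x (n + 1) - y n‖ = ‖U‖ := by
      rw [show x (n + 1) - y n = -U by rw [hU]; abel, norm_neg]
    rw [hxny, hGV] at d1
    rw [hGU, hnU] at d2
    -- quadratic form bound
    have hq2 : L / 2 * ‖U‖ ^ 2 + L / 2 * ‖V‖ ^ 2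
        - 1 / (2 * s) * (‖U + V‖ ^ 2 + ‖V‖ ^ 2 - ‖U‖ ^ 2)
        ≤ -c * ‖U + V‖ ^ 2 + e * ‖U‖ ^ 2 := by
      have hsc := hquad ‖U‖ ‖V‖ (norm_nonneg _) (norm_nonneg _)
      have hip : -(‖U‖ * ‖V‖) ≤ (⟪U, V⟫ : ℝ) := (abs_le.mp (abs_real_inner_le_norm U V)).1
      have hpol := norm_add_sq_real U V
      nlinarith [hsc, hpol, mul_nonneg (sub_nonneg.mpr hcq) (by linarith : (0:ℝ) ≤ (⟪U, V⟫ : ℝ) + ‖U‖ * ‖V‖)]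
    -- combine the two descent estimates
    have hcomb : s⁻¹ * (⟪U, V⟫ : ℝ) + s⁻¹ * ‖V‖ ^ 2
        = 1 / (2 * s) * (‖U + V‖ ^ 2 + ‖V‖ ^ 2 - ‖U‖ ^ 2) := by
      have hpol := norm_add_sq_real U V
      linear_combination (-(1 / (2 * s))) * hpol
    -- bound e * ‖U‖^2 by (c - δ) * D n
    have hUnorm : ‖U‖ ≤ β * ‖x (n + 1) - x n‖ := by
      have hUeq : U = ((β * n) / ((n : ℝ) + α)) • (x (n + 1) - x n) := by
        rw [hU, hy n]; abel
      have hden : (0:ℝ) < (n : ℝ) + α :=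
        add_pos_of_nonneg_of_pos (Nat.cast_nonneg n) hα
      have hn0 : (0:ℝ) ≤ (n : ℝ) := Nat.cast_nonneg n
      have ht0 : 0 ≤ (β * n) / ((n : ℝ) + α) :=
        div_nonneg (mul_nonneg hβ₁.le hn0) hden.le
      have ht1 : (β * n) / ((n : ℝ) + α) ≤ β := by
        rw [div_le_iff₀ hden]
        nlinarith [mul_le_mul_of_nonneg_left (by linarith : (n:ℝ) ≤ (n:ℝ) + α) hβ₁.le]
      rw [hUeq, norm_smul, Real.norm_eq_abs, abs_of_nonneg ht0]
      exact mul_le_mul_of_nonneg_right ht1 (norm_nonneg _)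
    have heU : e * ‖U‖ ^ 2 ≤ (c - δ) * D n := by
      have h1 : e * ‖U‖ ^ 2 ≤ e * (β * ‖x (n + 1) - x n‖) ^ 2 :=
        mul_le_mul_of_nonneg_left (by nlinarith [norm_nonneg U, norm_nonneg (x (n+1) - x n)]) he0
      have h2 : e * (β * ‖x (n + 1) - x n‖) ^ 2 = (e * β ^ 2) * D n := by rw [hD]; ring
      have h3 : (e * β ^ 2) * D n ≤ (c - δ) * D n :=
        mul_le_mul_of_nonneg_right heβ (hDpos n)
      linarith
    have hUV' : x (n + 2) - x (n + 1) = U + V := hUV.symm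
    have hDn1 : D (n + 1) = ‖U + V‖ ^ 2 := by
      simp only [hD]
      rw [show n + 1 + 1 = n + 2 from rfl, hUV']
    rw [hDn1]
    linarith [d1.2, d2.1, hq2, hcomb, heU]
  -- telescoping: partial sums of D are bounded
  have hD00 : D 0 = 0 := by rw [hD]; simp [← hinit]
  have htel : ∀ N : ℕ, g (x (N + 1)) + c * D N + δ * ∑ k ∈ Finset.range N, D k ≤ g (x 1) := by
    intro N
    induction N with
    | zero => simp [hD00]
    | succ N ih =>
      rw [Finset.sum_range_succ]
      have := hkey N
      nlinarith [this, ih]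
  have hDsum : Summable D := by
    apply summable_of_sum_range_le (c := (g (x 1) - B) / δ) hDpos
    intro N
    rw [le_div_iff₀ hδ]
    have h1 := htel N
    have h2 := hBle (x (N + 1))
    have h3 : 0 ≤ c * D N := mul_nonneg hc0 (hDpos N)
    nlinarith
  have hDzero : Tendsto D atTop (𝓝 0) := hDsum.tendsto_atTop_zero
  -- ‖x (n+1) - x n‖ → 0
  have hwn : Tendsto (fun n => ‖x (n + 1) - x n‖) atTop (𝓝 0) := by
    have h1 : Tendsto (fun n => Real.sqrt (D n)) atTop (𝓝 (Real.sqrt 0)) :=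
      (Real.continuous_sqrt.tendsto 0).comp hDzero
    rw [Real.sqrt_zero] at h1
    convert h1 using 2 with n
    rw [hD, Real.sqrt_sq (norm_nonneg _)]
  have hw0 : Tendsto (fun n => x (n + 1) - x n) atTop (𝓝 0) :=
    tendsto_zero_iff_norm_tendsto_zero.mpr hwn
  -- y n - x (n+1) → 0
  have hu0 : Tendsto (fun n => y n - x (n + 1)) atTop (𝓝 0) := by
    rw [tendsto_zero_iff_norm_tendsto_zero]
    apply squeeze_zero (fun n => norm_nonneg _) (g := fun n => β * ‖x (n + 1) - x n‖)
    · intro n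
      have hUeq : y n - x (n + 1) = ((β * n) / ((n : ℝ) + α)) • (x (n + 1) - x n) := by
        rw [hy n]; abel
      have hden : (0:ℝ) < (n : ℝ) + α :=
        add_pos_of_nonneg_of_pos (Nat.cast_nonneg n) hα
      have hn0 : (0:ℝ) ≤ (n : ℝ) := Nat.cast_nonneg n
      have ht0 : 0 ≤ (β * n) / ((n : ℝ) + α) :=
        div_nonneg (mul_nonneg hβ₁.le hn0) hden.le
      have ht1 : (β * n) / ((n : ℝ) + α) ≤ β := by
        rw [div_le_iff₀ hden]
        nlinarith [mul_le_mul_of_nonneg_left (by linarith : (n:ℝ) ≤ (n:ℝ) + α) hβ₁.le]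
      rw [hUeq, norm_smul, Real.norm_eq_abs, abs_of_nonneg ht0]
      exact mul_le_mul_of_nonneg_right ht1 (norm_nonneg _)
    · simpa using hwn.const_mul β
  -- gradient g (y n) → 0
  have hgrad0 : Tendsto (fun n => gradient g (y n)) atTop (𝓝 0) := by
    have heq : ∀ n : ℕ, gradient g (y n)
        = s⁻¹ • ((y n - x (n + 1)) - (x (n + 1 + 1) - x (n + 1))) := by
      intro n
      have h1 : s • gradient g (y n) = (y n - x (n + 1)) - (x (n + 1 + 1) - x (n + 1)) := by
        rw [show n + 1 + 1 = n + 2 from rfl, hstep n]; abel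
      rw [← h1, inv_smul_smul₀ hs₁.ne']
    rw [funext heq]
    have h2 : Tendsto (fun n => (y n - x (n + 1)) - (x (n + 1 + 1) - x (n + 1))) atTop (𝓝 0) := by
      have h3 : Tendsto (fun n : ℕ => x (n + 1 + 1) - x (n + 1)) atTop (𝓝 0) :=
        hw0.comp (tendsto_add_atTop_nat 1)
      simpa using hu0.sub h3
    simpa using h2.const_smul s⁻¹
  have hcontg : Continuous (gradient g) := grad_cont g L hL hlip
  -- cluster point transfer
  have hxy : ∀ p (φ : ℕ → ℕ), StrictMono φ → Tendsto (fun k => x (φ k + 1)) atTop (𝓝 p) →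
      Tendsto (fun k => y (φ k)) atTop (𝓝 p) := by
    intro p φ hφ hxp
    have h1 : Tendsto (fun k => y (φ k) - x (φ k + 1)) atTop (𝓝 0) :=
      hu0.comp hφ.tendsto_atTop
    have := hxp.add h1
    simpa using this
  constructor
  · rintro p ⟨φ, hφ, hxp⟩
    have hyp := hxy p φ hφ hxp
    have h1 : Tendsto (fun k => gradient g (y (φ k))) atTop (𝓝 (gradient g p)) :=
      (hcontg.tendsto p).comp hyp
    have h2 : Tendsto (fun k => gradient g (y (φ k))) atTop (𝓝 0) :=
      hgrad0.comp hφ.tendsto_atTop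
    exact tendsto_nhds_unique h1 h2
  · ext p
    simp only [Set.mem_setOf_eq]
    constructor
    · rintro ⟨φ, hφ, hxp⟩
      exact ⟨φ, hφ, hxy p φ hφ hxp⟩
    · rintro ⟨φ, hφ, hyp⟩
      refine ⟨φ, hφ, ?_⟩
      have h1 : Tendsto (fun k => y (φ k) - x (φ k + 1)) atTop (𝓝 0) :=
        hu0.comp hφ.tendsto_atTop
      have := hyp.sub h1
      simpa using this
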